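/- Under the hypotheses above, if additionally the feasible set F is contained in a ball of radius R in ℝ^d (Euclidean norm), then the number of iterations m before termination satisfies m < (2RL/t + 1)^d; in particular, the cutting-plane algorithm terminates in finitely many steps. -/

import Mathlib

open Metric MeasureTheory
open scoped ENNReal
set_option maxHeartbeats 1000000

theorem stmt_3 {d : ℕ} {Θ : Type*} (hd : 1 ≤ d)
    (f : EuclideanSpace ℝ (Fin d) → Θ → ℝ)
    (t L R : ℝ) (ht : 0 < t) (hL : 0 < L) (hR : 0 < R)
    (hlip : ∀ θ : Θ, ∀ x₁ x₂ : EuclideanSpace ℝ (Fin d),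
      |f x₁ θ - f x₂ θ| ≤ L * dist x₁ x₂)
    (F : Set (EuclideanSpace ℝ (Fin d))) (c : EuclideanSpace ℝ (Fin d))
    (hFR : F ⊆ Metric.closedBall c R)
    (M : ℕ) (x : ℕ → EuclideanSpace ℝ (Fin d)) (θ : ℕ → Θ)
    (hF : ∀ m : ℕ, m < M → x m ∈ F)
    (hviol : ∀ m : ℕ, m < M → t < f (x m) (θ m))
    (hfeas : ∀ m n : ℕ, m < n → n < M → f (x n) (θ m) ≤ 0) :
    (M : ℝ) < (2 * R * L / t + 1) ^ d := by
  have hbase : (1 : ℝ) < 2 * R * L / t + 1 := by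
    have : 0 < 2 * R * L / t := by positivity
    linarith
  have hd0 : d ≠ 0 := by omega
  -- separation
  set r : ℝ := t / (2 * L) with hrdef
  have hr : 0 < r := by positivity
  have hsep : ∀ i j : ℕ, i < M → j < M → i ≠ j → 2 * r < dist (x i) (x j) := by
    have key : ∀ i j : ℕ, i < j → j < M → 2 * r < dist (x i) (x j) := by
      intro i j hij hjM
      have h1 := hviol i (lt_trans hij hjM)
      have h2 := hfeas i j hij hjM
      have h3 := hlip (θ i) (x i) (x j)
      have h5 : t < L * dist (x i) (x j) := by
        have h6 : f (x i) (θ i) - f (x j) (θ i) ≤ |f (x i) (θ i) - f (x j) (θ i)| :=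
          le_abs_self _
        linarith
      have : 2 * r = t / L := by rw [hrdef, mul_div_assoc', mul_div_mul_left t L two_ne_zero]
      rw [this]
      rw [div_lt_iff₀ hL]
      linarith [h5, mul_comm L (dist (x i) (x j))]
    intro i j hi hj hij
    rcases lt_or_gt_of_ne hij with h | h
    · exact key i j h hj
    · rw [dist_comm]; exact key j i h hi
  -- small cases
  rcases Nat.lt_or_ge M 2 with hM2 | hM2
  · interval_cases M
    · simpa using pow_pos (by positivity : (0:ℝ) < 2 * R * L / t + 1) d
    · simpa using one_lt_pow₀ hbase hd0
  -- min pairwise distance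
  have hne : ((Finset.range M).offDiag).Nonempty := by
    refine ⟨(0, 1), ?_⟩
    simp [Finset.mem_offDiag]
    omega
  obtain ⟨p, hp, hpmin⟩ := Finset.exists_min_image ((Finset.range M).offDiag)
    (fun p => dist (x p.1) (x p.2)) hne
  set s : ℝ := dist (x p.1) (x p.2) with hsdef
  have hs_le : ∀ i j : ℕ, i < M → j < M → i ≠ j → s ≤ dist (x i) (x j) := by
    intro i j hi hj hij
    have hmem : (i, j) ∈ (Finset.range M).offDiag := by
      simp [Finset.mem_offDiag, hi, hj, hij]
    exact hpmin (i, j) hmem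
  have hs_gt : 2 * r < s := by
    simp only [Finset.mem_offDiag, Finset.mem_range] at hp
    exact hsep p.1 p.2 hp.1 hp.2.1 hp.2.2
  set r' : ℝ := r / 2 + s / 4 with hr'def
  have hr'r : r < r' := by rw [hr'def]; linarith
  have hr' : 0 < r' := lt_trans hr hr'r
  have hr's : 2 * r' < s := by rw [hr'def]; linarith
  -- disjoint balls
  have hdisj : (Finset.range M : Set ℕ).PairwiseDisjoint
      (fun i => closedBall (x i) r') := by
    intro i hi j hj hij
    simp only [Finset.coe_range, Set.mem_Iio] at hi hj
    exact closedBall_disjoint_closedBall (by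
      have := hs_le i j hi hj hij; linarith)
  -- containment
  have hsub : ∀ i ∈ Finset.range M, closedBall (x i) r' ⊆ closedBall c (R + r') := by
    intro i hi
    rw [Finset.mem_range] at hi
    have hxi : x i ∈ closedBall c R := hFR (hF i hi)
    intro y hy
    simp only [mem_closedBall] at *
    calc dist y c ≤ dist y (x i) + dist (x i) c := dist_triangle _ _ _
      _ ≤ r' + R := add_le_add hy hxi
      _ = R + r' := by ring
  -- measure argument
  have hfr : Module.finrank ℝ (EuclideanSpace ℝ (Fin d)) = d := finrank_euclideanSpace_fin
  have hball : ∀ i : ℕ, volume (closedBall (x i) r')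
      = ENNReal.ofReal (r' ^ d) * volume (ball (0 : EuclideanSpace ℝ (Fin d)) 1) := by
    intro i
    rw [Measure.addHaar_closedBall volume (x i) hr'.le, hfr]
  have hbig : volume (closedBall c (R + r'))
      = ENNReal.ofReal ((R + r') ^ d) * volume (ball (0 : EuclideanSpace ℝ (Fin d)) 1) := by
    rw [Measure.addHaar_closedBall volume c (by linarith : (0:ℝ) ≤ R + r'), hfr]
  have hsum : (M : ℝ≥0∞) * (ENNReal.ofReal (r' ^ d) * volume (ball (0 : EuclideanSpace ℝ (Fin d)) 1))
      ≤ ENNReal.ofReal ((R + r') ^ d) * volume (ball (0 : EuclideanSpace ℝ (Fin d)) 1) := by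
    calc (M : ℝ≥0∞) * (ENNReal.ofReal (r' ^ d) * volume (ball (0 : EuclideanSpace ℝ (Fin d)) 1))
        = ∑ i ∈ Finset.range M, volume (closedBall (x i) r') := by
          simp [hball, Finset.sum_const, nsmul_eq_mul]
      _ = volume (⋃ i ∈ Finset.range M, closedBall (x i) r') :=
          (measure_biUnion_finset hdisj (fun i _ => measurableSet_closedBall)).symm
      _ ≤ volume (closedBall c (R + r')) := by
          apply measure_mono
          exact Set.iUnion₂_subset hsub
      _ = _ := hbig
  have hv0 : volume (ball (0 : EuclideanSpace ℝ (Fin d)) 1) ≠ 0 :=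
    (measure_ball_pos volume (0 : EuclideanSpace ℝ (Fin d)) one_pos).ne'
  have hvtop : volume (ball (0 : EuclideanSpace ℝ (Fin d)) 1) ≠ ⊤ := measure_ball_lt_top.ne
  rw [← mul_assoc, ENNReal.mul_le_mul_iff_left hv0 hvtop] at hsum
  have hMd : (M : ℝ) * r' ^ d ≤ (R + r') ^ d := by
    have := hsum
    rw [← ENNReal.ofReal_natCast M, ← ENNReal.ofReal_mul (by positivity)] at this
    exact (ENNReal.ofReal_le_ofReal_iff (by positivity)).mp this
  have hM1 : (M : ℝ) ≤ (R / r' + 1) ^ d := by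
    have h1 : (M : ℝ) ≤ ((R + r') / r') ^ d := by
      rw [div_pow, le_div_iff₀ (by positivity)]
      exact hMd
    have h2 : (R + r') / r' = R / r' + 1 := by field_simp
    rwa [h2] at h1
  have hfinal : (R / r' + 1 : ℝ) < 2 * R * L / t + 1 := by
    have h3 : R / r = 2 * R * L / t := by
      rw [hrdef]; field_simp
    have h4 : R / r' < R / r := by
      apply div_lt_div_of_pos_left hR hr hr'r
    linarith [h3 ▸ h4]
  calc (M : ℝ) ≤ (R / r' + 1) ^ d := hM1
    _ < (2 * R * L / t + 1) ^ d := by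
        apply pow_lt_pow_left₀ hfinal (by positivity) hd0
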